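/- Let 1 < q < p < ∞ and n = 1. Define E := ∪_{k≥1} (k - 1 + k^{p/(p-q)}, k + k^{p/(p-q)}). Then χ_E ∈ M^p_q(ℝ), but χ_E does not lie in the closure in M^p_q(ℝ) of finite linear combinations of characteristic functions of sets of finite measure; hence M̃^p_q(ℝ) ⊊ M^p_q(ℝ). -/

import Mathlib

open MeasureTheory ENNReal Set Filter

/-- The one-dimensional Morrey norm `‖f‖_{M^p_q}` on `ℝ`. -/
noncomputable def morreyNorm1 (p q : ℝ) (f : ℝ → ℝ) : ℝ≥0∞ :=
  ⨆ (a : ℝ) (s : ℝ) (_ : 0 < s),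
    ENNReal.ofReal (s ^ (1 / p - 1 / q)) *
      (∫⁻ x in Set.Ioo a (a + s), ENNReal.ofReal (|f x| ^ q)) ^ (1 / q)

/-- A finite linear combination of characteristic functions of measurable sets of
finite measure, on ℝ. -/
def IsFinSimple1 (g : ℝ → ℝ) : Prop :=
  ∃ (N : ℕ) (c : Fin N → ℝ) (A : Fin N → Set ℝ),
    (∀ i, MeasurableSet (A i) ∧ volume (A i) < ⊤) ∧
    g = fun x => ∑ i, c i * (A i).indicator (fun _ => (1 : ℝ)) x

/-- Membership in M̃^p_q(ℝ): the closure in M^p_q(ℝ) of the finite simple functions. -/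
def MemMorreyTilde1 (p q : ℝ) (f : ℝ → ℝ) : Prop :=
  Measurable f ∧ morreyNorm1 p q f < ⊤ ∧
    ∀ ε : ℝ, 0 < ε → ∃ g, IsFinSimple1 g ∧
      morreyNorm1 p q (fun x => f x - g x) ≤ ENNReal.ofReal ε

/-- Superadditivity of `x ^ z` for `z ≥ 1` on nonnegative reals. -/
lemma stmt16_rpow_superadd {x y z : ℝ} (hx : 0 ≤ x) (hy : 0 ≤ y) (hz : 1 ≤ z) :
    x ^ z + y ^ z ≤ (x + y) ^ z := by
  have h := NNReal.add_rpow_le_rpow_add x.toNNReal y.toNNReal hz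
  have h' := (NNReal.coe_le_coe).2 h
  push_cast at h'
  rwa [Real.coe_toNNReal x hx, Real.coe_toNNReal y hy] at h'

/-- with E = ∪_{k≥1} (k-1+k^{p/(p-q)}, k+k^{p/(p-q)}), the function χ_E
belongs to M^p_q(ℝ) but not to M̃^p_q(ℝ); hence M̃^p_q(ℝ) ⊊ M^p_q(ℝ). -/
theorem stmt16 (p q : ℝ) (hq : 1 < q) (hqp : q < p) :
    morreyNorm1 p q
      ((⋃ k : ℕ, Set.Ioo (((k : ℝ) + 1) - 1 + ((k : ℝ) + 1) ^ (p / (p - q)))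
        (((k : ℝ) + 1) + ((k : ℝ) + 1) ^ (p / (p - q)))).indicator
        fun _ => (1 : ℝ)) < ⊤ ∧
    ¬ MemMorreyTilde1 p q
      ((⋃ k : ℕ, Set.Ioo (((k : ℝ) + 1) - 1 + ((k : ℝ) + 1) ^ (p / (p - q)))
        (((k : ℝ) + 1) + ((k : ℝ) + 1) ^ (p / (p - q)))).indicator
        fun _ => (1 : ℝ)) := by
  have hq0 : (0:ℝ) < q := lt_trans one_pos hq
  have hp0 : (0:ℝ) < p := lt_trans hq0 hqp
  have hpq : (0:ℝ) < p - q := sub_pos.2 hqp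
  set α := p / (p - q) with hαdef
  have hα1 : 1 ≤ α := by rw [le_div_iff₀ hpq]; linarith
  have hα0 : 0 < α := lt_of_lt_of_le one_pos hα1
  have hq1inv : 1 / q < 1 := by rw [div_lt_one hq0]; exact hq
  have hq1inv0 : 0 < 1 / q := by positivity
  set I : ℕ → Set ℝ := fun k => Set.Ioo (((k : ℝ) + 1) - 1 + ((k : ℝ) + 1) ^ α)
      (((k : ℝ) + 1) + ((k : ℝ) + 1) ^ α) with hI
  set E := ⋃ k : ℕ, I k with hEdef
  have hEmeas : MeasurableSet E := MeasurableSet.iUnion fun k => measurableSet_Ioo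
  have hvolI : ∀ k : ℕ, volume (I k) = 1 := by
    intro k
    rw [hI]
    simp only [Real.volume_Ioo]
    rw [show ((k : ℝ) + 1) + ((k : ℝ) + 1) ^ α - (((k : ℝ) + 1) - 1 + ((k : ℝ) + 1) ^ α)
      = 1 by ring]
    exact ENNReal.ofReal_one
  -- the lintegral of the indicator is the measure of the intersection
  have hind : ∀ J : Set ℝ,
      (∫⁻ x in J, ENNReal.ofReal (|E.indicator (fun _ => (1:ℝ)) x| ^ q)) = volume (E ∩ J) := by
    intro J
    have hfun : (fun x => ENNReal.ofReal (|E.indicator (fun _ => (1:ℝ)) x| ^ q))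
        = E.indicator (fun _ => (1:ℝ≥0∞)) := by
      funext x
      by_cases hx : x ∈ E
      · simp [Set.indicator_of_mem hx]
      · simp [Set.indicator_of_notMem hx, Real.zero_rpow (ne_of_gt hq0)]
    rw [hfun, lintegral_indicator hEmeas, setLIntegral_one, Measure.restrict_apply hEmeas]
  -- counting bound on the measure of E ∩ (a, a+s)
  have hvol : ∀ a s : ℝ, 0 < s →
      volume (E ∩ Ioo a (a + s)) ≤ ENNReal.ofReal (2 * (s + 1) ^ (1/α) + 3) := by
    intro a s hs
    set D := (s + 1) ^ (1/α) with hD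
    have hD0 : 0 < D := Real.rpow_pos_of_pos (by linarith) _
    have hEI : E ∩ Ioo a (a + s) = ⋃ k, (I k ∩ Ioo a (a + s)) := by
      rw [hEdef, Set.iUnion_inter]
    rw [hEI]
    refine le_trans (measure_iUnion_le _) ?_
    by_cases hK : ∀ k, I k ∩ Ioo a (a + s) = ∅
    · simp only [hK, measure_empty, tsum_zero]
      positivity
    push_neg at hK
    obtain ⟨k0, hk0⟩ := hK
    -- key distance estimate
    have key : ∀ k m : ℕ, k < m → (I k ∩ Ioo a (a + s)).Nonempty →
        (I m ∩ Ioo a (a + s)).Nonempty → (m : ℝ) - k < D := by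
      rintro k m hkm ⟨x, hxI, hxJ⟩ ⟨y, hyI, hyJ⟩
      rw [hI] at hxI hyI
      have h1 : a < (k:ℝ) + 1 + ((k:ℝ) + 1) ^ α := lt_trans hxJ.1 hxI.2
      have h2 : (m:ℝ) + ((m:ℝ) + 1) ^ α < a + s := by
        have h2a := hyI.1
        have h2b := hyJ.2
        nlinarith
      have hmk1 : (1:ℝ) ≤ (m:ℝ) - k := by
        have : (k:ℝ) + 1 ≤ m := by exact_mod_cast hkm
        linarith
      have hsup : ((m:ℝ) - k) ^ α + ((k:ℝ) + 1) ^ α ≤ ((m:ℝ) + 1) ^ α := by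
        have h := stmt16_rpow_superadd (x := (m:ℝ) - k) (y := (k:ℝ) + 1)
          (by linarith) (by positivity) hα1
        rwa [show (m:ℝ) - k + ((k:ℝ) + 1) = (m:ℝ) + 1 by ring] at h
      have h4 : ((m:ℝ) - k) ^ α < s + 1 := by nlinarith
      have h5 : (((m:ℝ) - k) ^ α) ^ (1/α) < D :=
        Real.rpow_lt_rpow (by positivity) h4 (by positivity)
      rwa [← Real.rpow_mul (by linarith), mul_one_div_cancel (ne_of_gt hα0),
        Real.rpow_one] at h5
    set n : ℕ := ⌈D⌉₊ with hn
    have hDn : D ≤ (n : ℝ) := Nat.le_ceil D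
    have hnD : (n : ℝ) ≤ D + 1 := le_of_lt (Nat.ceil_lt_add_one (le_of_lt hD0))
    have hsubset : ∀ k : ℕ, (I k ∩ Ioo a (a + s)).Nonempty →
        k ∈ Finset.Ico (k0 - n) (k0 + n + 1) := by
      intro k hk
      rcases lt_trichotomy k k0 with h | h | h
      · have hlt : (k0:ℝ) - k < D := key k k0 h hk hk0
        have : (k0:ℝ) < k + n := by linarith
        have hnat : k0 < k + n := by exact_mod_cast this
        refine Finset.mem_Ico.2 ⟨by omega, by omega⟩
      · subst h; exact Finset.mem_Ico.2 ⟨by omega, by omega⟩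
      · have hlt : (k:ℝ) - k0 < D := key k0 k h hk0 hk
        have : (k:ℝ) < k0 + n := by linarith
        have hnat : k < k0 + n := by exact_mod_cast this
        refine Finset.mem_Ico.2 ⟨by omega, by omega⟩
    calc ∑' k, volume (I k ∩ Ioo a (a + s))
        ≤ ∑' k, (if k ∈ Finset.Ico (k0 - n) (k0 + n + 1) then (1:ℝ≥0∞) else 0) := by
          refine ENNReal.tsum_le_tsum fun k => ?_
          by_cases hk : (I k ∩ Ioo a (a + s)).Nonempty
          · rw [if_pos (hsubset k hk)]
            refine le_trans (measure_mono Set.inter_subset_left) ?_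
            rw [hvolI k]
          · rw [Set.not_nonempty_iff_eq_empty] at hk
            simp [hk]
      _ = ∑ k ∈ Finset.Ico (k0 - n) (k0 + n + 1), (1:ℝ≥0∞) := by
          rw [tsum_eq_sum (fun b hb => if_neg hb)]
          exact Finset.sum_congr rfl fun k hk => if_pos hk
      _ = ((Finset.Ico (k0 - n) (k0 + n + 1)).card : ℝ≥0∞) := by
          simp
      _ ≤ ((2 * n + 1 : ℕ) : ℝ≥0∞) := by
          have : (Finset.Ico (k0 - n) (k0 + n + 1)).card ≤ 2 * n + 1 := by
            rw [Nat.card_Ico]; omega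
          exact_mod_cast this
      _ ≤ ENNReal.ofReal (2 * D + 3) := by
          rw [← ENNReal.ofReal_natCast]
          refine ENNReal.ofReal_le_ofReal ?_
          push_cast
          linarith
  -- bound on each term of the sup
  have hterm : ∀ a s : ℝ, 0 < s →
      ENNReal.ofReal (s ^ (1/p - 1/q)) * (volume (E ∩ Ioo a (a + s))) ^ (1/q)
        ≤ (7 : ℝ≥0∞) := by
    intro a s hs
    rcases le_or_gt s 1 with hs1 | hs1
    · have hv : volume (E ∩ Ioo a (a + s)) ≤ ENNReal.ofReal s := by
        refine le_trans (measure_mono Set.inter_subset_right) ?_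
        rw [Real.volume_Ioo, add_sub_cancel_left]
      calc ENNReal.ofReal (s ^ (1/p - 1/q)) * (volume (E ∩ Ioo a (a + s))) ^ (1/q)
          ≤ ENNReal.ofReal (s ^ (1/p - 1/q)) * (ENNReal.ofReal s) ^ (1/q) := by
            gcongr
        _ = ENNReal.ofReal (s ^ (1/p - 1/q) * s ^ (1/q)) := by
            rw [ENNReal.ofReal_rpow_of_pos hs,
              ENNReal.ofReal_mul (Real.rpow_nonneg (le_of_lt hs) _)]
        _ = ENNReal.ofReal (s ^ (1/p)) := by
            rw [← Real.rpow_add hs, show 1/p - 1/q + 1/q = 1/p by ring]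
        _ ≤ 7 := by
            refine le_trans (ENNReal.ofReal_le_ofReal
              (Real.rpow_le_one (le_of_lt hs) hs1 (by positivity))) ?_
            simp
    · set D := (s + 1) ^ (1/α) with hD
      have hs0 : (0:ℝ) < s := hs
      have hsα : (1:ℝ) ≤ s ^ (1/α) := Real.one_le_rpow (le_of_lt hs1) (by positivity)
      have hDle : D ≤ 2 * s ^ (1/α) := by
        have h1 : D ≤ (2 * s) ^ (1/α) :=
          Real.rpow_le_rpow (by linarith) (by linarith) (by positivity)
        have h2 : (2 * s) ^ (1/α) = 2 ^ (1/α) * s ^ (1/α) :=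
          Real.mul_rpow (by norm_num) (le_of_lt hs0)
        have h3 : (2:ℝ) ^ (1/α) ≤ 2 := by
          calc (2:ℝ) ^ (1/α) ≤ 2 ^ (1:ℝ) :=
                Real.rpow_le_rpow_of_exponent_le one_le_two ((div_le_one hα0).2 hα1)
            _ = 2 := Real.rpow_one 2
        nlinarith [Real.rpow_nonneg (le_of_lt hs0) (1/α)]
      have hB : 2 * D + 3 ≤ 7 * s ^ (1/α) := by nlinarith
      have hreal : s ^ (1/p - 1/q) * (2 * D + 3) ^ (1/q) ≤ 7 := by
        have h6 : (2 * D + 3) ^ (1/q) ≤ (7 * s ^ (1/α)) ^ (1/q) :=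
          Real.rpow_le_rpow (by positivity) hB (by positivity)
        have h7 : (7 * s ^ (1/α)) ^ (1/q) = 7 ^ (1/q) * (s ^ (1/α)) ^ (1/q) :=
          Real.mul_rpow (by norm_num) (by positivity)
        have h8 : (s ^ (1/α)) ^ (1/q) = s ^ ((1/α) * (1/q)) :=
          (Real.rpow_mul (le_of_lt hs0) _ _).symm
        have h9 : s ^ (1/p - 1/q) * s ^ ((1/α) * (1/q)) = 1 := by
          rw [← Real.rpow_add hs0]
          have hexp : 1/p - 1/q + (1/α) * (1/q) = 0 := by
            rw [hαdef]
            field_simp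
            ring
          rw [hexp, Real.rpow_zero]
        have h10 : (7:ℝ) ^ (1/q) ≤ 7 := by
          calc (7:ℝ) ^ (1/q) ≤ 7 ^ (1:ℝ) :=
              Real.rpow_le_rpow_of_exponent_le (by norm_num) (le_of_lt hq1inv)
            _ = 7 := Real.rpow_one 7
        calc s ^ (1/p - 1/q) * (2 * D + 3) ^ (1/q)
            ≤ s ^ (1/p - 1/q) * (7 ^ (1/q) * s ^ ((1/α) * (1/q))) := by
              rw [← h8, ← h7]
              exact mul_le_mul_of_nonneg_left h6 (Real.rpow_nonneg (le_of_lt hs0) _)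
          _ = 7 ^ (1/q) * (s ^ (1/p - 1/q) * s ^ ((1/α) * (1/q))) := by ring
          _ = 7 ^ (1/q) := by rw [h9, mul_one]
          _ ≤ 7 := h10
      calc ENNReal.ofReal (s ^ (1/p - 1/q)) * (volume (E ∩ Ioo a (a + s))) ^ (1/q)
          ≤ ENNReal.ofReal (s ^ (1/p - 1/q)) * (ENNReal.ofReal (2 * D + 3)) ^ (1/q) := by
            gcongr
            exact hvol a s hs
        _ = ENNReal.ofReal (s ^ (1/p - 1/q) * (2 * D + 3) ^ (1/q)) := by
            rw [ENNReal.ofReal_rpow_of_pos (by positivity),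
              ENNReal.ofReal_mul (Real.rpow_nonneg (le_of_lt hs0) _)]
        _ ≤ ENNReal.ofReal 7 := ENNReal.ofReal_le_ofReal hreal
        _ = 7 := by norm_num
  constructor
  · -- finiteness of the Morrey norm
    refine lt_of_le_of_lt (le_trans ?_ (le_refl (7:ℝ≥0∞))) (by norm_num)
    simp only [morreyNorm1]
    refine iSup_le fun a => iSup_le fun s => iSup_le fun hs => ?_
    rw [hind (Ioo a (a + s))]
    exact hterm a s hs
  · -- χ_E is not in the closure of the finite simple functions
    rintro ⟨-, -, happrox⟩
    obtain ⟨g, hgfs, hgnorm⟩ := happrox (1/2) (by norm_num)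
    obtain ⟨N, c, A, hA, rfl⟩ := hgfs
    set U := ⋃ i, A i with hU
    have hUmeas : MeasurableSet U := MeasurableSet.iUnion fun i => (hA i).1
    have hUfin : volume U ≠ ⊤ := by
      refine ne_of_lt (lt_of_le_of_lt (measure_iUnion_le _) ?_)
      rw [tsum_fintype]
      exact ENNReal.sum_lt_top.2 fun i _ => (hA i).2
    -- tail of U has small measure
    have htail : Tendsto (fun n : ℕ => volume (U ∩ Ici (n:ℝ))) atTop (nhds 0) := by
      have hmono : Antitone (fun n : ℕ => U ∩ Ici (n:ℝ)) := by
        intro m n hmn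
        exact Set.inter_subset_inter_right U (Ici_subset_Ici.2 (by exact_mod_cast hmn))
      have hinter : (⋂ n : ℕ, U ∩ Ici (n:ℝ)) = ∅ := by
        ext x
        simp only [Set.mem_iInter, Set.mem_inter_iff, Set.mem_Ici, Set.mem_empty_iff_false,
          iff_false, not_forall]
        obtain ⟨n, hn⟩ := exists_nat_gt x
        exact ⟨n, fun h => absurd h.2 (not_le.2 hn)⟩
      have h := tendsto_measure_iInter_atTop
        (μ := volume) (s := fun n : ℕ => U ∩ Ici (n:ℝ))
        (fun n => (hUmeas.inter measurableSet_Ici).nullMeasurableSet) hmono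
        ⟨0, ne_of_lt (lt_of_le_of_lt (measure_mono Set.inter_subset_left)
          (lt_top_iff_ne_top.2 hUfin))⟩
      rwa [hinter, measure_empty] at h
    obtain ⟨K, hK⟩ : ∃ K : ℕ, volume (U ∩ Ici (K:ℝ)) ≤ 1/2 := by
      rw [ENNReal.tendsto_atTop_zero] at htail
      obtain ⟨K, hK⟩ := htail (1/2) (by norm_num)
      exact ⟨K, hK K le_rfl⟩
    -- the K-th interval
    set a : ℝ := ((K:ℝ) + 1) - 1 + ((K:ℝ) + 1) ^ α with ha
    have hK1 : (1:ℝ) ≤ (K:ℝ) + 1 := by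
      have := Nat.cast_nonneg (α := ℝ) K
      linarith
    have hIKsub : Ioo a (a + 1) ⊆ Ici (K:ℝ) := by
      rw [ha]
      intro x hx
      have h1 : (1:ℝ) ≤ ((K:ℝ) + 1) ^ α := Real.one_le_rpow hK1 (le_of_lt hα0)
      have h2 := hx.1
      simp only [Set.mem_Ici]
      linarith
    have hIKE : Ioo a (a + 1) ⊆ E := by
      rw [ha, hEdef]
      intro x hx
      refine Set.mem_iUnion.2 ⟨K, ?_⟩
      rw [hI]
      exact Set.mem_Ioo.2 ⟨hx.1, by linarith [hx.2]⟩
    -- measure of the good part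
    have hgood : (1:ℝ≥0∞)/2 ≤ volume (Ioo a (a + 1) \ U) := by
      have hsplit : volume (Ioo a (a + 1)) ≤
          volume (Ioo a (a + 1) \ U) + volume (Ioo a (a + 1) ∩ U) := by
        refine le_trans (measure_mono ?_) (measure_union_le _ _)
        intro x hx
        by_cases hxU : x ∈ U
        · exact Or.inr ⟨hx, hxU⟩
        · exact Or.inl ⟨hx, hxU⟩
      have hIoo : volume (Ioo a (a + 1)) = 1 := by
        rw [Real.volume_Ioo, add_sub_cancel_left, ENNReal.ofReal_one]
      have hsmall : volume (Ioo a (a + 1) ∩ U) ≤ 1/2 := by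
        refine le_trans (measure_mono ?_) hK
        intro x hx
        exact ⟨hx.2, hIKsub hx.1⟩
      have h1 : (1:ℝ≥0∞) ≤ volume (Ioo a (a + 1) \ U) + 1/2 :=
        calc (1:ℝ≥0∞) = volume (Ioo a (a + 1)) := hIoo.symm
          _ ≤ volume (Ioo a (a + 1) \ U) + volume (Ioo a (a + 1) ∩ U) := hsplit
          _ ≤ volume (Ioo a (a + 1) \ U) + 1/2 := add_le_add_right hsmall _
      have h2 : (1:ℝ≥0∞) - 1/2 ≤ volume (Ioo a (a + 1) \ U) :=
        tsub_le_iff_right.2 h1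
      rwa [ENNReal.sub_eq_of_eq_add (by norm_num : (1/2:ℝ≥0∞) ≠ ⊤)
        (ENNReal.add_halves 1).symm] at h2
    -- lower bound on the norm of the difference
    set f := E.indicator (fun _ => (1:ℝ)) with hf
    set g := fun x => ∑ i, c i * (A i).indicator (fun _ => (1 : ℝ)) x with hg
    have hcongr : ∫⁻ x in Ioo a (a + 1) \ U, ENNReal.ofReal (|f x - g x| ^ q)
        = volume (Ioo a (a + 1) \ U) := by
      rw [← setLIntegral_one]
      refine setLIntegral_congr_fun (measurableSet_Ioo.diff hUmeas)
        (fun x hx => ?_)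
      have hfx : f x = 1 := Set.indicator_of_mem (hIKE hx.1) _
      have hgx : g x = 0 := by
        rw [hg]
        refine Finset.sum_eq_zero fun i _ => ?_
        rw [Set.indicator_of_notMem (fun hxa => hx.2 (Set.mem_iUnion.2 ⟨i, hxa⟩)), mul_zero]
      rw [hfx, hgx]
      norm_num
    have hlint : volume (Ioo a (a + 1) \ U) ≤
        ∫⁻ x in Ioo a (a + 1), ENNReal.ofReal (|f x - g x| ^ q) := by
      rw [← hcongr]
      exact lintegral_mono_set Set.diff_subset
    have hlow : ((1:ℝ≥0∞)/2) ^ (1/q) ≤ morreyNorm1 p q (fun x => f x - g x) := by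
      simp only [morreyNorm1]
      refine le_trans ?_ (le_iSup_of_le a (le_iSup_of_le 1 (le_iSup_of_le one_pos le_rfl)))
      rw [show (1:ℝ) ^ (1/p - 1/q) = 1 from Real.one_rpow _, ENNReal.ofReal_one, one_mul]
      exact ENNReal.rpow_le_rpow (le_trans hgood hlint) (le_of_lt hq1inv0)
    have hhalf : (1:ℝ≥0∞)/2 < ((1:ℝ≥0∞)/2) ^ (1/q) := by
      have := ENNReal.rpow_lt_rpow_of_exponent_gt
        (x := (1:ℝ≥0∞)/2) (by norm_num) (by norm_num) hq1inv
      rwa [ENNReal.rpow_one] at this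
    have hofReal : ENNReal.ofReal ((1:ℝ)/2) = (1:ℝ≥0∞)/2 := by
      rw [ENNReal.ofReal_div_of_pos (by norm_num)]
      norm_num
    have : morreyNorm1 p q (fun x => f x - g x) ≤ (1:ℝ≥0∞)/2 := by
      rw [← hofReal]; exact hgnorm
    exact absurd (lt_of_lt_of_le hhalf (le_trans hlow this)) (lt_irrefl _)
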